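/- Let X be a real Banach space and x ∈ X a nonzero vector at which the norm of X is Fréchet differentiable. Then the norm of the bidual X** is Fréchet differentiable at the image of x under the canonical embedding of X into X**. -/

import Mathlib

open Filter Topology Metric Set NormedSpace MeasureTheory

noncomputable section

/-- The norm of `X` is Fréchet differentiable at `x`: there is a continuous linear
functional `f` with `lim_{y→0} (‖x+y‖ - ‖x‖ - f y)/‖y‖ = 0`. -/
def FrechetSmoothPoint (X : Type*) [NormedAddCommGroup X] [NormedSpace ℝ X] (x : X) : Prop :=
  ∃ f : X →L[ℝ] ℝ,
    Tendsto (fun y : X => (‖x + y‖ - ‖x‖ - f y) / ‖y‖) (𝓝[≠] (0 : X)) (𝓝 0)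

/-- `x` is a smooth point: it is nonzero and there is exactly one norm-one functional
attaining the norm at `x`. -/
def SmoothPoint (X : Type*) [NormedAddCommGroup X] [NormedSpace ℝ X] (x : X) : Prop :=
  x ≠ 0 ∧ ∃! f : StrongDual ℝ X, ‖f‖ = 1 ∧ f x = ‖x‖

/-- `x` is a very smooth point: it is a smooth point whose canonical image in the bidual
is a smooth point of the bidual. -/
def VerySmoothPoint (X : Type*) [NormedAddCommGroup X] [NormedSpace ℝ X] (x : X) : Prop :=
  SmoothPoint X x ∧ SmoothPoint (StrongDual ℝ (StrongDual ℝ X)) (inclusionInDoubleDual ℝ X x)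

/-- `X = M ⊕_∞ N`: `M, N` are closed subspaces with trivial intersection whose sum is
everything, and `‖m + n‖ = max ‖m‖ ‖n‖` for `m ∈ M`, `n ∈ N`. -/
def MSumDecomp {X : Type*} [NormedAddCommGroup X] [NormedSpace ℝ X]
    (M N : Submodule ℝ X) : Prop :=
  IsClosed (M : Set X) ∧ IsClosed (N : Set X) ∧ M ⊓ N = ⊥ ∧ M ⊔ N = ⊤ ∧
    ∀ m ∈ M, ∀ n ∈ N, ‖m + n‖ = max ‖m‖ ‖n‖

/-- `X = M ⊕₁ N`: `M, N` are closed subspaces with trivial intersection whose sum is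
everything, and `‖m + n‖ = ‖m‖ + ‖n‖` for `m ∈ M`, `n ∈ N`; such `M` is an L-summand. -/
def LSumDecomp {X : Type*} [NormedAddCommGroup X] [NormedSpace ℝ X]
    (M N : Submodule ℝ X) : Prop :=
  IsClosed (M : Set X) ∧ IsClosed (N : Set X) ∧ M ⊓ N = ⊥ ∧ M ⊔ N = ⊤ ∧
    ∀ m ∈ M, ∀ n ∈ N, ‖m + n‖ = ‖m‖ + ‖n‖

/-- The state space `S_x` of a vector `x`. -/
def StateSpace {X : Type*} [NormedAddCommGroup X] [NormedSpace ℝ X] (x : X) :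
    Set (StrongDual ℝ X) :=
  {f : StrongDual ℝ X | ‖f‖ ≤ 1 ∧ f x = 1}

/-- `x` is a quasi-polyhedral (QP) point: for some `δ > 0`, every norm-one `z` with
`‖z - x‖ < δ` has `S_z ⊆ S_x`. -/
def QPPoint (X : Type*) [NormedAddCommGroup X] [NormedSpace ℝ X] (x : X) : Prop :=
  ∃ δ > (0 : ℝ), ∀ z : X, ‖z‖ = 1 → ‖z - x‖ < δ → StateSpace z ⊆ StateSpace x

/-- `X` is an `L¹`-predual space: `X*` is isometrically isomorphic to `L¹(μ)` for some
(positive) measure `μ`. -/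
def IsL1Predual (X : Type*) [NormedAddCommGroup X] [NormedSpace ℝ X] : Prop :=
  ∃ (α : Type) (_ : MeasurableSpace α) (μ : Measure α),
    Nonempty (StrongDual ℝ X ≃ₗᵢ[ℝ] Lp ℝ 1 μ)

section Aux
variable {X : Type*} [NormedAddCommGroup X] [NormedSpace ℝ X]

lemma frechet_aux_fx (x : X) (hx : x ≠ 0) (f : X →L[ℝ] ℝ)
    (h : Tendsto (fun y : X => (‖x + y‖ - ‖x‖ - f y) / ‖y‖) (𝓝[≠] (0 : X)) (𝓝 0)) :
    f x = ‖x‖ := by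
  have hmap : Tendsto (fun t : ℝ => t • x) (𝓝[>] (0:ℝ)) (𝓝[≠] (0:X)) := by
    apply tendsto_nhdsWithin_of_tendsto_nhds_of_eventually_within
    · simpa using ((show Continuous fun t : ℝ => t • x from continuous_id.smul continuous_const).tendsto' (0:ℝ) 0 (by simp)).mono_left
        nhdsWithin_le_nhds
    · filter_upwards [self_mem_nhdsWithin] with t (ht : 0 < t)
      exact smul_ne_zero ht.ne' hx
  have h2 := h.comp hmap
  have hxn : (0:ℝ) < ‖x‖ := norm_pos_iff.2 hx
  have heq : ∀ᶠ t in 𝓝[>] (0:ℝ),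
      (fun y : X => (‖x + y‖ - ‖x‖ - f y) / ‖y‖) (t • x) = (‖x‖ - f x) / ‖x‖ := by
    filter_upwards [self_mem_nhdsWithin] with t (ht : 0 < t)
    have : x + t • x = (1 + t) • x := by module
    rw [this, norm_smul, norm_smul, _root_.map_smul]
    simp only [Real.norm_eq_abs, smul_eq_mul]
    rw [abs_of_pos (by linarith : (0:ℝ) < 1 + t), abs_of_pos ht]
    field_simp
    ring
  have h3 : Tendsto (fun _ : ℝ => (‖x‖ - f x) / ‖x‖) (𝓝[>] (0:ℝ)) (𝓝 0) := h2.congr' heq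
  have h4 := tendsto_nhds_unique h3 tendsto_const_nhds
  have : ‖x‖ - f x = 0 := by field_simp at h4; linarith
  linarith

lemma frechet_aux_le (x : X) (f : X →L[ℝ] ℝ)
    (h : Tendsto (fun y : X => (‖x + y‖ - ‖x‖ - f y) / ‖y‖) (𝓝[≠] (0 : X)) (𝓝 0))
    (y : X) : f y ≤ ‖y‖ := by
  rcases eq_or_ne y 0 with rfl | hy
  · simp
  have hyn : (0:ℝ) < ‖y‖ := norm_pos_iff.2 hy
  have hmap : Tendsto (fun t : ℝ => t • y) (𝓝[>] (0:ℝ)) (𝓝[≠] (0:X)) := by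
    apply tendsto_nhdsWithin_of_tendsto_nhds_of_eventually_within
    · simpa using ((show Continuous fun t : ℝ => t • y from continuous_id.smul continuous_const).tendsto' (0:ℝ) 0 (by simp)).mono_left
        nhdsWithin_le_nhds
    · filter_upwards [self_mem_nhdsWithin] with t (ht : 0 < t)
      exact smul_ne_zero ht.ne' hy
  have h2 := h.comp hmap
  have hub : ∀ᶠ t in 𝓝[>] (0:ℝ),
      (fun z : X => (‖x + z‖ - ‖x‖ - f z) / ‖z‖) (t • y) ≤ 1 - f y / ‖y‖ := by
    filter_upwards [self_mem_nhdsWithin] with t (ht : 0 < t)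
    simp only [_root_.map_smul, norm_smul, Real.norm_eq_abs, smul_eq_mul, abs_of_pos ht]
    rw [div_le_iff₀ (by positivity)]
    have h1 : ‖x + t • y‖ ≤ ‖x‖ + t * ‖y‖ := by
      calc ‖x + t • y‖ ≤ ‖x‖ + ‖t • y‖ := norm_add_le _ _
      _ = ‖x‖ + t * ‖y‖ := by rw [norm_smul, Real.norm_eq_abs, abs_of_pos ht]
    have heq : (1 - f y / ‖y‖) * (t * ‖y‖) = t * ‖y‖ - t * f y := by field_simp
    rw [heq]; linarith
  have := le_of_tendsto h2 hub
  rw [sub_nonneg, div_le_one hyn] at this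
  linarith

lemma exists_near_norm {E : Type*} [NormedAddCommGroup E] [NormedSpace ℝ E]
    (φ : E →L[ℝ] ℝ) {η : ℝ} (hη : 0 < η) : ∃ g : E, ‖g‖ ≤ 1 ∧ ‖φ‖ - η ≤ φ g := by
  obtain ⟨g, hg1, hg2⟩ := φ.exists_lt_apply_of_lt_opNorm (r := ‖φ‖ - η) (by linarith)
  rw [Real.norm_eq_abs] at hg2
  rcases le_or_gt 0 (φ g) with h | h
  · exact ⟨g, hg1.le, by rw [abs_of_nonneg h] at hg2; linarith⟩
  · refine ⟨-g, by simpa using hg1.le, ?_⟩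
    rw [map_neg]
    rw [abs_of_neg h] at hg2
    linarith

end Aux

lemma frechet_key_arith {ε s t η : ℝ} (hε : 0 < ε) (hs0 : 0 < s) (ht0 : 0 < t)
    (htδ : t < s*ε/64) (hts : t ≤ s) (hη : η = t*ε*s/(16*(s+1))) :
    t * ((ε/8*s + 4*t + 2*η)/s) + 2*η < ε * t := by
  have hη0 : 0 < η := by rw [hη]; positivity
  have e1 : t * ((ε/8*s + 4*t + 2*η)/s) = t*ε/8 + 4*t*t/s + 2*t*η/s := by
    field_simp
  have e2 : 4*t*t/s < t*ε/16 := by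
    rw [div_lt_iff₀ hs0]; nlinarith
  have e4' : η ≤ t*ε/16 := by
    rw [hη, div_le_div_iff₀ (by positivity) (by norm_num : (0:ℝ) < 16)]
    nlinarith
  have e4 : 2*η ≤ t*ε/8 := by linarith
  have e3 : 2*t*η/s ≤ 2*η := by
    rw [div_le_iff₀ hs0]; nlinarith
  nlinarith

theorem frechet_smooth_in_bidual_of_frechet_smooth
    {X : Type*} [NormedAddCommGroup X] [NormedSpace ℝ X] [CompleteSpace X]
    (x : X) (hx : x ≠ 0) (hF : FrechetSmoothPoint X x) :
    FrechetSmoothPoint (StrongDual ℝ (StrongDual ℝ X)) (inclusionInDoubleDual ℝ X x) := by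
  obtain ⟨f, hf⟩ := hF
  have hfx : f x = ‖x‖ := frechet_aux_fx x hx f hf
  have hfle : ∀ y, f y ≤ ‖y‖ := frechet_aux_le x f hf
  have hfabs : ∀ y, |f y| ≤ ‖y‖ := by
    intro y
    rw [abs_le]
    constructor
    · have := hfle (-y); rw [map_neg, norm_neg] at this; linarith
    · exact hfle y
  have hfnorm : ‖f‖ ≤ 1 := f.opNorm_le_bound zero_le_one (by simpa using hfabs)
  have hJnorm : ∀ z : X, ‖inclusionInDoubleDual ℝ X z‖ = ‖z‖ := fun z =>
    (inclusionInDoubleDualLi ℝ (E := X)).norm_map z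
  refine ⟨inclusionInDoubleDual ℝ (StrongDual ℝ X) f, ?_⟩
  rw [Metric.tendsto_nhdsWithin_nhds]
  intro ε hε
  rw [Metric.tendsto_nhdsWithin_nhds] at hf
  obtain ⟨δ₀, hδ₀, hδ⟩ := hf (ε/16) (by positivity)
  set s := δ₀/2 with hs
  have hs0 : 0 < s := by positivity
  -- uniform bound on the modulus of smoothness
  have hΔ : ∀ y : X, ‖y‖ ≤ s → ‖x + y‖ + ‖x - y‖ - 2*‖x‖ ≤ ε/8 * s := by
    intro y hy
    rcases eq_or_ne y 0 with rfl | hy0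
    · simp only [add_zero, sub_zero]
      nlinarith
    have hyn : (0:ℝ) < ‖y‖ := norm_pos_iff.2 hy0
    have hylt : dist y (0:X) < δ₀ := by
      rw [dist_zero_right]; calc ‖y‖ ≤ s := hy
      _ < δ₀ := by rw [hs]; linarith
    have h1 := hδ (by simpa using hy0) hylt
    have h2 := hδ (x := -y) (by simpa using hy0) (by simpa using hylt)
    rw [dist_zero_right, Real.norm_eq_abs, abs_div, abs_norm] at h1 h2
    rw [div_lt_iff₀ hyn] at h1
    rw [norm_neg, div_lt_iff₀ hyn] at h2
    have e1 : ‖x + y‖ - ‖x‖ - f y ≤ |‖x + y‖ - ‖x‖ - f y| := le_abs_self _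
    have hxy : x + -y = x - y := by abel
    rw [map_neg, hxy] at h2
    have e2 : ‖x - y‖ - ‖x‖ - -f y ≤ |‖x - y‖ - ‖x‖ - -f y| := le_abs_self _
    have e3 : ε/16*‖y‖ + ε/16*‖y‖ ≤ ε/8 * s := by nlinarith
    linarith
  refine ⟨min (s*ε/64) s, by positivity, ?_⟩
  intro F hF0 hFd
  replace hFd : ‖F‖ < min (s*ε/64) s := by rwa [← dist_zero_right F]
  have hF0' : F ≠ 0 := by simpa using hF0
  set t := ‖F‖ with ht
  have ht0 : 0 < t := by rw [ht]; exact (norm_pos_iff (a := F)).mpr hF0'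
  have htδ : t < s*ε/64 := lt_of_lt_of_le hFd (min_le_left _ _)
  have hts : t ≤ s := le_of_lt (lt_of_lt_of_le hFd (min_le_right _ _))
  set η := t * ε * s / (16*(s+1)) with hη
  have hη0 : 0 < η := by positivity
  set φp := inclusionInDoubleDual ℝ X x + F with hφp
  set φm := inclusionInDoubleDual ℝ X x - F with hφm
  obtain ⟨f₁, hf₁n, hf₁⟩ := exists_near_norm φp hη0
  obtain ⟨f₂, hf₂n, hf₂⟩ := exists_near_norm φm hη0
  have hφpf₁ : φp f₁ = f₁ x + F f₁ := rfl
  have hφmf₂ : φm f₂ = f₂ x - F f₂ := rfl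
  have happ : ∀ (g : StrongDual ℝ X) (z : X), ‖g‖ ≤ 1 → g z ≤ ‖z‖ := by
    intro g z hg
    calc g z ≤ |g z| := le_abs_self _
    _ ≤ ‖g‖ * ‖z‖ := g.le_opNorm z
    _ ≤ 1 * ‖z‖ := by apply mul_le_mul_of_nonneg_right hg (norm_nonneg _)
    _ = ‖z‖ := one_mul _
  have hFf₁ : F f₁ ≤ t := by
    calc F f₁ ≤ |F f₁| := le_abs_self _
    _ ≤ ‖F‖ * ‖f₁‖ := F.le_opNorm f₁
    _ ≤ t * 1 := by apply mul_le_mul_of_nonneg_left hf₁n (norm_nonneg F)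
    _ = t := mul_one _
  have hFf₂ : -(F f₂) ≤ t := by
    have : F (-f₂) ≤ |F (-f₂)| := le_abs_self _
    rw [map_neg] at this
    calc -(F f₂) ≤ |(-(F f₂))| := le_abs_self _
    _ = |F f₂| := abs_neg _
    _ ≤ ‖F‖ * ‖f₂‖ := F.le_opNorm f₂
    _ ≤ t * 1 := by apply mul_le_mul_of_nonneg_left hf₂n (norm_nonneg F)
    _ = t := mul_one _
  have hφp_low : ‖x‖ - t ≤ ‖φp‖ := by
    have h1 : ‖inclusionInDoubleDual ℝ X x‖ ≤ ‖φp‖ + ‖F‖ := by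
      calc ‖inclusionInDoubleDual ℝ X x‖ = ‖φp - F‖ := by rw [hφp]; congr 1; abel
      _ ≤ ‖φp‖ + ‖F‖ := norm_sub_le φp F
    rw [hJnorm x] at h1; linarith
  have hφm_low : ‖x‖ - t ≤ ‖φm‖ := by
    have h1 : ‖inclusionInDoubleDual ℝ X x‖ ≤ ‖φm‖ + ‖F‖ := by
      calc ‖inclusionInDoubleDual ℝ X x‖ = ‖φm + F‖ := by rw [hφm]; congr 1; abel
      _ ≤ ‖φm‖ + ‖F‖ := norm_add_le φm F
    rw [hJnorm x] at h1; linarith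
  have hf₁x_ge : ‖x‖ - 2*t - η ≤ f₁ x := by
    have := hf₁; rw [hφpf₁] at this; linarith
  have hf₂x_ge : ‖x‖ - 2*t - η ≤ f₂ x := by
    have := hf₂; rw [hφmf₂] at this; linarith
  have hf₁x_le : f₁ x ≤ ‖x‖ := happ f₁ x hf₁n
  have hf₂x_le : f₂ x ≤ ‖x‖ := happ f₂ x hf₂n
  set K := ε/8*s + 4*t + 2*η with hK
  have hK0 : 0 ≤ K := by positivity
  -- one-sided estimate on sphere of radius s
  have hsphere : ∀ z : X, ‖z‖ = s → (f₁ - f₂) z ≤ K := by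
    intro z hz
    have e1 : f₁ z ≤ ‖x + z‖ - f₁ x := by
      have := happ f₁ (x + z) hf₁n
      have h2 : f₁ (x + z) = f₁ x + f₁ z := map_add f₁ x z
      linarith
    have e2 : -(f₂ z) ≤ ‖x - z‖ - f₂ x := by
      have := happ f₂ (x - z) hf₂n
      have h2 : f₂ (x - z) = f₂ x - f₂ z := map_sub f₂ x z
      linarith
    have e3 := hΔ z (le_of_eq hz)
    have : (f₁ - f₂) z = f₁ z - f₂ z := rfl
    rw [this, hK]
    linarith
  have hsphere_abs : ∀ z : X, ‖z‖ = s → |(f₁ - f₂) z| ≤ K := by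
    intro z hz
    rw [abs_le]
    refine ⟨?_, hsphere z hz⟩
    have := hsphere (-z) (by rwa [norm_neg])
    rw [map_neg] at this
    linarith
  have hdiff : ‖f₁ - f₂‖ ≤ K / s := by
    apply ContinuousLinearMap.opNorm_le_bound _ (by positivity)
    intro y
    rcases eq_or_ne y 0 with rfl | hy0
    · simp
    have hyn : (0:ℝ) < ‖y‖ := norm_pos_iff.2 hy0
    set z := (s/‖y‖) • y with hz
    have hzn : ‖z‖ = s := by
      rw [hz, norm_smul, Real.norm_eq_abs, abs_of_pos (by positivity)]
      field_simp
    have hyz : y = (‖y‖/s) • z := by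
      rw [hz, smul_smul]
      have : ‖y‖/s * (s/‖y‖) = 1 := by field_simp
      rw [this, one_smul]
    have : (f₁ - f₂) y = (‖y‖/s) * ((f₁ - f₂) z) := by
      conv_lhs => rw [hyz]
      rw [_root_.map_smul]; rfl
    rw [Real.norm_eq_abs, this, abs_mul, abs_of_pos (by positivity : (0:ℝ) < ‖y‖/s)]
    calc ‖y‖/s * |(f₁ - f₂) z| ≤ ‖y‖/s * K := by
          apply mul_le_mul_of_nonneg_left (hsphere_abs z hzn) (by positivity)
    _ = K / s * ‖y‖ := by ring
  -- combine
  have hFdiff : F (f₁ - f₂) ≤ t * (K / s) := by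
    calc F (f₁ - f₂) ≤ |F (f₁ - f₂)| := le_abs_self _
    _ ≤ ‖F‖ * ‖f₁ - f₂‖ := F.le_opNorm _
    _ ≤ t * (K/s) := by apply mul_le_mul_of_nonneg_left hdiff (norm_nonneg F)
  have hFd12 : F (f₁ - f₂) = F f₁ - F f₂ := map_sub F f₁ f₂
  have hsum : ‖φp‖ + ‖φm‖ - 2*‖x‖ ≤ t * (K/s) + 2*η := by
    have h1 : ‖φp‖ ≤ f₁ x + F f₁ + η := by rw [hφpf₁] at hf₁; linarith
    have h2 : ‖φm‖ ≤ f₂ x - F f₂ + η := by rw [hφmf₂] at hf₂; linarith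
    linarith [hFdiff, hFd12.symm.le, hf₁x_le, hf₂x_le, hFd12]
  -- N bounds
  have hφpf : φp f = ‖x‖ + F f := by
    have : φp f = f x + F f := rfl
    rw [this, hfx]
  have hφmf : φm f = ‖x‖ - F f := by
    have : φm f = f x - F f := rfl
    rw [this, hfx]
  have hflew : ∀ (ψ : StrongDual ℝ (StrongDual ℝ X)), ψ f ≤ ‖ψ‖ := by
    intro ψ
    calc ψ f ≤ |ψ f| := le_abs_self _
    _ ≤ ‖ψ‖ * ‖f‖ := ψ.le_opNorm f
    _ ≤ ‖ψ‖ * 1 := mul_le_mul_of_nonneg_left hfnorm (norm_nonneg ψ)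
    _ = ‖ψ‖ := mul_one _
  have hN_low : 0 ≤ ‖φp‖ - ‖x‖ - F f := by
    have := hflew φp; rw [hφpf] at this; linarith
  have hN_up : ‖φp‖ - ‖x‖ - F f ≤ t * (K/s) + 2*η := by
    have := hflew φm; rw [hφmf] at this; linarith
  clear_value s t η K
  -- final arithmetic
  have hkey : t * (K/s) + 2*η < ε * t := by
    rw [hK]
    exact frechet_key_arith hε hs0 ht0 htδ hts hη
  rw [dist_zero_right, Real.norm_eq_abs]
  have hGF : (inclusionInDoubleDual ℝ (StrongDual ℝ X) f) F = F f := rfl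
  rw [hGF, hJnorm x]
  have hnum : ‖inclusionInDoubleDual ℝ X x + F‖ - ‖x‖ - F f = ‖φp‖ - ‖x‖ - F f := rfl
  rw [hnum, abs_div, abs_of_nonneg hN_low, abs_of_pos ht0, div_lt_iff₀ ht0]
  calc ‖φp‖ - ‖x‖ - F f ≤ t * (K/s) + 2*η := hN_up
  _ < ε * t := hkey
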